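/- Let I : (0,1) → (0,1) be quasiconcave. Then the following are equivalent: (a) T_I is bounded on L¹, i.e. there exists C > 0 such that ∫_0^1 (T_I f)(t) dt ≤ C·∫_0^1 f^*(t) dt for every f ∈ M_+(0,1); (b) I satisfies condition (★), i.e. there exists C' > 0 with ∫_0^t I(s)/s ds ≤ C'·I(t) for all t ∈ (0,1). -/

import Mathlib

open MeasureTheory Set Filter
open scoped ENNReal

noncomputable section

/-- The nonincreasing rearrangement of `f` over `(0,1)`. -/
def rearr (f : ℝ → ℝ≥0∞) (t : ℝ) : ℝ≥0∞ :=
  sInf {l : ℝ≥0∞ | volume {s ∈ Set.Ioo (0:ℝ) 1 | l < f s} ≤ ENNReal.ofReal t}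

/-- The maximal nonincreasing rearrangement `f^{**}(t) = (1/t) ∫_0^t f^*(s) ds`. -/
def dstar (f : ℝ → ℝ≥0∞) (t : ℝ) : ℝ≥0∞ :=
  (ENNReal.ofReal t)⁻¹ * ∫⁻ s in Set.Ioo (0:ℝ) t, rearr f s

/-- The `L¹(0,1)` norm. -/
def lOne (f : ℝ → ℝ≥0∞) : ℝ≥0∞ := ∫⁻ t in Set.Ioo (0:ℝ) 1, f t

/-- The norm of the Marcinkiewicz-type space `m_I`. -/
def mNorm (I : ℝ → ℝ) (f : ℝ → ℝ≥0∞) : ℝ≥0∞ :=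
  ⨆ t ∈ Set.Ioo (0:ℝ) 1, ENNReal.ofReal (I t) * rearr f t

/-- The norm of `m_Ĩ` where `Ĩ(t) = t / I(t)`. -/
def mNormTilde (I : ℝ → ℝ) (f : ℝ → ℝ≥0∞) : ℝ≥0∞ :=
  ⨆ t ∈ Set.Ioo (0:ℝ) 1, ENNReal.ofReal (t / I t) * rearr f t

/-- The supremum operator `S_I f(t) = (1/I(t)) sup_{0<s≤t} I(s) f^*(s)`. -/
def SI (I : ℝ → ℝ) (f : ℝ → ℝ≥0∞) : ℝ → ℝ≥0∞ := fun t =>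
  (ENNReal.ofReal (I t))⁻¹ * ⨆ s ∈ Set.Ioc (0:ℝ) t, ENNReal.ofReal (I s) * rearr f s

/-- The supremum operator `T_I f(t) = (I(t)/t) sup_{t≤s<1} (s/I(s)) f^*(s)`. -/
def TI (I : ℝ → ℝ) (f : ℝ → ℝ≥0∞) : ℝ → ℝ≥0∞ := fun t =>
  ENNReal.ofReal (I t / t) * ⨆ s ∈ Set.Ico t 1, ENNReal.ofReal (s / I s) * rearr f s

/-- `H_I f(t) = ∫_t^1 f(s)/I(s) ds`. -/
def HI (I : ℝ → ℝ) (f : ℝ → ℝ≥0∞) : ℝ → ℝ≥0∞ := fun t =>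
  ∫⁻ s in Set.Ioo t 1, f s / ENNReal.ofReal (I s)

/-- `R_I f(t) = (1/I(t)) ∫_0^t f(s) ds`. -/
def RI (I : ℝ → ℝ) (f : ℝ → ℝ≥0∞) : ℝ → ℝ≥0∞ := fun t =>
  (ENNReal.ofReal (I t))⁻¹ * ∫⁻ s in Set.Ioo (0:ℝ) t, f s

/-- `I : (0,1) → (0,1)` is quasiconcave: a nondecreasing bijection of `(0,1)` onto `(0,1)`
with `I(t)/t` nonincreasing, `I(0+) = 0` and `I(1-) = 1`. -/
def Quasiconcave (I : ℝ → ℝ) : Prop :=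
  Set.BijOn I (Set.Ioo 0 1) (Set.Ioo 0 1) ∧
  MonotoneOn I (Set.Ioo 0 1) ∧
  AntitoneOn (fun t => I t / t) (Set.Ioo 0 1) ∧
  Tendsto I (nhdsWithin 0 (Set.Ioo 0 1)) (nhds 0) ∧
  Tendsto I (nhdsWithin 1 (Set.Ioo 0 1)) (nhds 1)

/-- Condition (★): `∫_0^t I(s)/s ds ≲ I(t)`. -/
def StarCond (I : ℝ → ℝ) : Prop :=
  ∃ C : ℝ, 0 < C ∧ ∀ t ∈ Set.Ioo (0:ℝ) 1,
    ∫⁻ s in Set.Ioo (0:ℝ) t, ENNReal.ofReal (I s / s) ≤ ENNReal.ofReal (C * I t)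

/-- The average property: `∫_0^t ds/I(s) ≲ t/I(t)`. -/
def AvgProp (I : ℝ → ℝ) : Prop :=
  ∃ C : ℝ, 0 < C ∧ ∀ t ∈ Set.Ioo (0:ℝ) 1,
    ∫⁻ s in Set.Ioo (0:ℝ) t, ENNReal.ofReal (1 / I s) ≤ ENNReal.ofReal (C * (t / I t))

/-- The condition `∫_t^1 I(s)/s² ds ≲ (1/t) ∫_0^t I(s)/s ds`. -/
def MaxCond (I : ℝ → ℝ) : Prop :=
  ∃ C : ℝ, 0 < C ∧ ∀ t ∈ Set.Ioo (0:ℝ) 1,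
    ∫⁻ s in Set.Ioo t 1, ENNReal.ofReal (I s / s ^ 2) ≤
      ENNReal.ofReal (C / t) * ∫⁻ s in Set.Ioo (0:ℝ) t, ENNReal.ofReal (I s / s)

/-- The class `𝒬` of quasiconcave functions. -/
def ClassQ (I : ℝ → ℝ) : Prop :=
  Quasiconcave I ∧ StarCond I ∧ AvgProp I ∧ MaxCond I ∧
  ∃ c d : ℝ,
    IsLUB {l : ℝ | 0 ≤ l ∧ ∀ t ∈ Set.Ioo (0:ℝ) 1,
      ENNReal.ofReal (l * (I t / t ^ 2 - 1)) ≤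
        ∫⁻ s in Set.Ioo t 1, ENNReal.ofReal (I s / s ^ 3)} c ∧
    IsLeast {e : ℝ | 0 < e ∧ ∀ t ∈ Set.Ioo (0:ℝ) 1,
      ∫⁻ s in Set.Ioo t 1, ENNReal.ofReal (I s / s ^ 2) ≤
        ENNReal.ofReal (e * (I t / t))} d ∧
    (1 - c) * d ≤ c

/-- The `Δ₂` condition: `I(2t) ≤ C I(t)` for `t ∈ (0,1/2)`. -/
def Delta2 (I : ℝ → ℝ) : Prop :=
  ∃ C : ℝ, 0 < C ∧ ∀ t ∈ Set.Ioo (0:ℝ) (1/2), I (2 * t) ≤ C * I t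

/-- A rearrangement-invariant Banach function norm on `M₊(0,1)`. -/
def IsRiNorm (ρ : (ℝ → ℝ≥0∞) → ℝ≥0∞) : Prop :=
  (∀ f : ℝ → ℝ≥0∞, Measurable f →
      (ρ f = 0 ↔ f =ᵐ[volume.restrict (Set.Ioo (0:ℝ) 1)] 0)) ∧
  (∀ f : ℝ → ℝ≥0∞, Measurable f → ∀ a : ℝ, 0 ≤ a →
      ρ (fun t => ENNReal.ofReal a * f t) = ENNReal.ofReal a * ρ f) ∧
  (∀ f g : ℝ → ℝ≥0∞, Measurable f → Measurable g →
      ρ (fun t => f t + g t) ≤ ρ f + ρ g) ∧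
  (∀ f g : ℝ → ℝ≥0∞, Measurable f → Measurable g →
      (∀ᵐ t ∂(volume.restrict (Set.Ioo (0:ℝ) 1)), f t ≤ g t) → ρ f ≤ ρ g) ∧
  (∀ (fn : ℕ → ℝ → ℝ≥0∞) (f : ℝ → ℝ≥0∞), (∀ n, Measurable (fn n)) → Measurable f →
      (∀ᵐ t ∂(volume.restrict (Set.Ioo (0:ℝ) 1)), Monotone (fun n => fn n t)) →
      (∀ᵐ t ∂(volume.restrict (Set.Ioo (0:ℝ) 1)), (⨆ n, fn n t) = f t) →
      (⨆ n, ρ (fn n)) = ρ f) ∧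
  (ρ (fun _ => 1) < ⊤) ∧
  (∃ c : ℝ, 0 < c ∧ ∀ f : ℝ → ℝ≥0∞, Measurable f →
      ∫⁻ t in Set.Ioo (0:ℝ) 1, f t ≤ ENNReal.ofReal c * ρ f) ∧
  (∀ f : ℝ → ℝ≥0∞, Measurable f → ρ f = ρ (rearr f))

/-- The associate norm `ρ'`. -/
def assoc (ρ : (ℝ → ℝ≥0∞) → ℝ≥0∞) (f : ℝ → ℝ≥0∞) : ℝ≥0∞ :=
  ⨆ (g : ℝ → ℝ≥0∞) (_ : Measurable g ∧ ρ g ≤ 1),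
    ∫⁻ t in Set.Ioo (0:ℝ) 1, f t * g t

/-- The optimal target norm `‖f‖_{Y_X}` of the r.i. norm `ρ = ‖·‖_X` under `H_I`. -/
def optTargetNorm (I : ℝ → ℝ) (ρ : (ℝ → ℝ≥0∞) → ℝ≥0∞) (f : ℝ → ℝ≥0∞) : ℝ≥0∞ :=
  ⨆ (g : ℝ → ℝ≥0∞) (_ : Measurable g ∧ assoc ρ (RI I (rearr g)) ≤ 1),
    ∫⁻ t in Set.Ioo (0:ℝ) 1, rearr f t * rearr g t

/-- The optimal domain norm `‖f‖_{X_Y} = sup_{h ∼ f} ‖H_I h‖_Y`. -/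
def optDomainNorm (I : ℝ → ℝ) (ρY : (ℝ → ℝ≥0∞) → ℝ≥0∞) (f : ℝ → ℝ≥0∞) : ℝ≥0∞ :=
  ⨆ (h : ℝ → ℝ≥0∞)
    (_ : Measurable h ∧ ∀ t ∈ Set.Ioo (0:ℝ) 1, rearr h t = rearr f t),
      ρY (HI I h)

/-- `H_I : X → Y` boundedly. -/
def HIBounded (I : ℝ → ℝ) (ρX ρY : (ℝ → ℝ≥0∞) → ℝ≥0∞) : Prop :=
  ∃ C : ℝ, 0 < C ∧ ∀ f : ℝ → ℝ≥0∞, Measurable f →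
    ρY (HI I f) ≤ ENNReal.ofReal C * ρX f

/-- `X` is the optimal domain space for `Y` under `H_I`. -/
def IsOptimalDomain (I : ℝ → ℝ) (ρX ρY : (ℝ → ℝ≥0∞) → ℝ≥0∞) : Prop :=
  HIBounded I ρX ρY ∧
  ∀ ρZ : (ℝ → ℝ≥0∞) → ℝ≥0∞, IsRiNorm ρZ → HIBounded I ρZ ρY →
    ∃ C : ℝ, 0 < C ∧ ∀ f : ℝ → ℝ≥0∞, Measurable f →
      ρX f ≤ ENNReal.ofReal C * ρZ f

/-- `Y` is the optimal target space for `X` under `H_I`. -/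
def IsOptimalTarget (I : ℝ → ℝ) (ρX ρY : (ℝ → ℝ≥0∞) → ℝ≥0∞) : Prop :=
  HIBounded I ρX ρY ∧
  ∀ ρZ : (ℝ → ℝ≥0∞) → ℝ≥0∞, IsRiNorm ρZ → HIBounded I ρX ρZ →
    ∃ C : ℝ, 0 < C ∧ ∀ f : ℝ → ℝ≥0∞, Measurable f →
      ρZ f ≤ ENNReal.ofReal C * ρY f

namespace Stmt5aux

open MeasureTheory Set Filter

variable {I : ℝ → ℝ} {f : ℝ → ℝ≥0∞}

/-! ### Basic facts about quasiconcave functions -/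

lemma mem_I (hqc : Quasiconcave I) {t : ℝ} (ht : t ∈ Set.Ioo (0:ℝ) 1) :
    I t ∈ Set.Ioo (0:ℝ) 1 :=
  hqc.1.mapsTo ht

lemma ratio_mono (hqc : Quasiconcave I) :
    MonotoneOn (fun t => t / I t) (Set.Ioo (0:ℝ) 1) := by
  intro x hx y hy hxy
  have hIx := (mem_I hqc hx).1
  have hIy := (mem_I hqc hy).1
  have h := hqc.2.2.1 hx hy hxy
  simp only at h ⊢
  rw [div_le_div_iff₀ hy.1 hx.1] at h
  rw [div_le_div_iff₀ hIx hIy]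
  nlinarith

lemma le_I (hqc : Quasiconcave I) {t : ℝ} (ht : t ∈ Set.Ioo (0:ℝ) 1) : t ≤ I t := by
  haveI : (nhdsWithin (1:ℝ) (Set.Ioo (0:ℝ) 1)).NeBot := by
    apply mem_closure_iff_nhdsWithin_neBot.1
    rw [closure_Ioo (by norm_num : (0:ℝ) ≠ 1)]
    exact ⟨by norm_num, le_rfl⟩
  have htend : Tendsto (fun s => I s / s) (nhdsWithin (1:ℝ) (Set.Ioo (0:ℝ) 1)) (nhds 1) := by
    have h2 : Tendsto (fun s : ℝ => s) (nhdsWithin (1:ℝ) (Set.Ioo (0:ℝ) 1)) (nhds 1) :=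
      tendsto_id.mono_left nhdsWithin_le_nhds
    have h3 : Tendsto (fun s => I s / s) (nhdsWithin (1:ℝ) (Set.Ioo (0:ℝ) 1)) (nhds (1 / 1)) :=
      hqc.2.2.2.2.div h2 one_ne_zero
    simpa using h3
  have hev : ∀ᶠ s in nhdsWithin (1:ℝ) (Set.Ioo (0:ℝ) 1), I s / s ≤ I t / t := by
    have h1 : ∀ᶠ s in nhdsWithin (1:ℝ) (Set.Ioo (0:ℝ) 1), t < s :=
      eventually_nhdsWithin_of_eventually_nhds (eventually_gt_nhds ht.2)
    filter_upwards [h1, self_mem_nhdsWithin] with s hts hsm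
    exact hqc.2.2.1 ht hsm hts.le
  have hle : (1:ℝ) ≤ I t / t := le_of_tendsto htend hev
  have := (one_le_div ht.1).1 hle
  linarith

lemma ratio_le_one (hqc : Quasiconcave I) {t : ℝ} (ht : t ∈ Set.Ioo (0:ℝ) 1) :
    t / I t ≤ 1 := by
  rw [div_le_one (mem_I hqc ht).1]
  exact le_I hqc ht

/-! ### A monotone extension of `I` -/

def Ibar (I : ℝ → ℝ) : ℝ → ℝ := fun t => if t ≤ 0 then 0 else if t < 1 then I t else 1

lemma Ibar_eq (I : ℝ → ℝ) {t : ℝ} (ht : t ∈ Set.Ioo (0:ℝ) 1) : Ibar I t = I t := by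
  simp only [Ibar, if_neg (not_le.2 ht.1), if_pos ht.2]

lemma Ibar_mono (hqc : Quasiconcave I) : Monotone (Ibar I) := by
  intro x y hxy
  unfold Ibar
  by_cases hy0 : y ≤ 0
  · rw [if_pos (hxy.trans hy0), if_pos hy0]
  · push_neg at hy0
    rw [if_neg (not_le.2 hy0)]
    by_cases hx0 : x ≤ 0
    · rw [if_pos hx0]
      by_cases hy1 : y < 1
      · rw [if_pos hy1]; exact (mem_I hqc ⟨hy0, hy1⟩).1.le
      · rw [if_neg hy1]; norm_num
    · push_neg at hx0
      rw [if_neg (not_le.2 hx0)]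
      by_cases hy1 : y < 1
      · rw [if_pos hy1, if_pos (lt_of_le_of_lt hxy hy1)]
        exact hqc.2.1 ⟨hx0, lt_of_le_of_lt hxy hy1⟩ ⟨hy0, hy1⟩ hxy
      · rw [if_neg hy1]
        by_cases hx1 : x < 1
        · rw [if_pos hx1]; exact (mem_I hqc ⟨hx0, hx1⟩).2.le
        · rw [if_neg hx1]

/-! ### Basic facts about the rearrangement -/

lemma rearr_antitone (f : ℝ → ℝ≥0∞) : Antitone (rearr f) := by
  intro x y hxy
  apply sInf_le_sInf
  intro l hl
  exact hl.trans (ENNReal.ofReal_le_ofReal hxy)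

lemma meas_layer (x : ℝ≥0∞) :
    volume {l : ℝ | l ∈ Set.Ioi (0:ℝ) ∧ ENNReal.ofReal l < x} = x := by
  rcases eq_or_ne x ⊤ with rfl | hx
  · have h : {l : ℝ | l ∈ Set.Ioi (0:ℝ) ∧ ENNReal.ofReal l < ⊤} = Set.Ioi 0 := by
      ext l; simp [ENNReal.ofReal_lt_top]
    rw [h, Real.volume_Ioi]
  · have h : {l : ℝ | l ∈ Set.Ioi (0:ℝ) ∧ ENNReal.ofReal l < x} = Set.Ioo 0 x.toReal := by
      ext l
      simp only [Set.mem_setOf_eq, Set.mem_Ioi, Set.mem_Ioo]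
      constructor
      · rintro ⟨h0, hl⟩; exact ⟨h0, (ENNReal.ofReal_lt_iff_lt_toReal h0.le hx).1 hl⟩
      · rintro ⟨h0, hl⟩; exact ⟨h0, (ENNReal.ofReal_lt_iff_lt_toReal h0.le hx).2 hl⟩
    rw [h, Real.volume_Ioo, sub_zero, ENNReal.ofReal_toReal hx]

lemma meas_layer' (x : ℝ≥0∞) :
    volume ({l : ℝ | ENNReal.ofReal l < x} ∩ Set.Ioi 0) = x := by
  conv_rhs => rw [← meas_layer x]
  congr 1
  ext l
  simp only [Set.mem_inter_iff, Set.mem_setOf_eq, Set.mem_Ioi]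
  tauto

/-! ### The distribution-type functions `aa`, `DD`, `bb` -/

def aa (f : ℝ → ℝ≥0∞) (l : ℝ) : ℝ≥0∞ :=
  volume {u ∈ Set.Ioo (0:ℝ) 1 | ENNReal.ofReal l < rearr f u}

def DD (f : ℝ → ℝ≥0∞) (l : ℝ) : ℝ≥0∞ :=
  volume {x ∈ Set.Ioo (0:ℝ) 1 | ENNReal.ofReal l < f x}

def bb (I : ℝ → ℝ) (f : ℝ → ℝ≥0∞) (l : ℝ) : ℝ≥0∞ :=
  if aa f l < 1 then ENNReal.ofReal ((aa f l).toReal / Ibar I ((aa f l).toReal)) else 1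

lemma volume_Ioo01 : volume (Set.Ioo (0:ℝ) 1) = 1 := by
  rw [Real.volume_Ioo, sub_zero, ENNReal.ofReal_one]

lemma aa_le_one (f : ℝ → ℝ≥0∞) (l : ℝ) : aa f l ≤ 1 := by
  rw [← volume_Ioo01]
  exact measure_mono (Set.sep_subset _ _)

lemma aa_ne_top (f : ℝ → ℝ≥0∞) (l : ℝ) : aa f l ≠ ⊤ :=
  (lt_of_le_of_lt (aa_le_one f l) ENNReal.one_lt_top).ne

lemma aa_antitone (f : ℝ → ℝ≥0∞) : Antitone (aa f) := by
  intro x y hxy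
  apply measure_mono
  rintro u ⟨hu1, hu2⟩
  exact ⟨hu1, lt_of_le_of_lt (ENNReal.ofReal_le_ofReal hxy) hu2⟩

lemma lt_DD {l s : ℝ} (h : ENNReal.ofReal l < rearr f s) : ENNReal.ofReal s < DD f l := by
  by_contra hc
  push_neg at hc
  have hmem : ENNReal.ofReal l ∈
      {l' : ℝ≥0∞ | volume {x ∈ Set.Ioo (0:ℝ) 1 | l' < f x} ≤ ENNReal.ofReal s} := hc
  exact absurd (sInf_le hmem : rearr f s ≤ ENNReal.ofReal l) (not_le.2 h)

lemma rearr_gt_of_lt_DD (hf : Measurable f) {l u : ℝ} (hl : 0 ≤ l) (hu : 0 < u)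
    (h : ENNReal.ofReal u < DD f l) : ENNReal.ofReal l < rearr f u := by
  set S : ℕ → Set ℝ :=
    fun n => {x ∈ Set.Ioo (0:ℝ) 1 | ENNReal.ofReal (l + 1/(n+1)) < f x} with hS
  have hmono : Monotone S := by
    intro m n hmn x hx
    refine ⟨hx.1, lt_of_le_of_lt (ENNReal.ofReal_le_ofReal ?_) hx.2⟩
    have h1 : (1:ℝ)/(n+1) ≤ 1/(m+1) := by
      apply one_div_le_one_div_of_le (by positivity)
      have : (m:ℝ) ≤ n := Nat.cast_le.2 hmn
      linarith
    linarith
  have hUnion : ⋃ n, S n = {x ∈ Set.Ioo (0:ℝ) 1 | ENNReal.ofReal l < f x} := by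
    ext x
    simp only [Set.mem_iUnion, hS, Set.mem_setOf_eq]
    constructor
    · rintro ⟨n, h1, h2⟩
      refine ⟨h1, lt_of_le_of_lt (ENNReal.ofReal_le_ofReal ?_) h2⟩
      have : (0:ℝ) < 1/((n:ℝ)+1) := by positivity
      linarith
    · rintro ⟨h1, h2⟩
      rcases eq_or_ne (f x) ⊤ with htop | hne
      · exact ⟨0, h1, by rw [htop]; exact ENNReal.ofReal_lt_top⟩
      · have hlt : l < (f x).toReal := (ENNReal.ofReal_lt_iff_lt_toReal hl hne).1 h2
        obtain ⟨n, hn⟩ := exists_nat_one_div_lt (show (0:ℝ) < (f x).toReal - l by linarith)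
        refine ⟨n, h1, ?_⟩
        rw [ENNReal.ofReal_lt_iff_lt_toReal (by positivity) hne]
        linarith
  have htend : Tendsto (fun n => volume (S n)) atTop (nhds (DD f l)) := by
    have := tendsto_measure_iUnion_atTop (μ := volume) hmono
    rw [hUnion] at this
    exact this
  have hev : ∀ᶠ n in atTop, ENNReal.ofReal u < volume (S n) :=
    htend.eventually (eventually_gt_nhds h)
  obtain ⟨n, hn⟩ := hev.exists
  have hge : ENNReal.ofReal (l + 1/(n+1)) ≤ rearr f u := by
    apply le_sInf
    intro c hc
    by_contra hcl
    push_neg at hcl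
    have hsub : S n ⊆ {x ∈ Set.Ioo (0:ℝ) 1 | c < f x} := by
      rintro x ⟨hx1, hx2⟩
      exact ⟨hx1, lt_trans hcl hx2⟩
    have : volume (S n) ≤ ENNReal.ofReal u := le_trans (measure_mono hsub) hc
    exact absurd this (not_le.2 hn)
  calc ENNReal.ofReal l < ENNReal.ofReal (l + 1/(n+1)) := by
        rw [ENNReal.ofReal_lt_ofReal_iff (by positivity)]
        have : (0:ℝ) < 1/((n:ℝ)+1) := by positivity
        linarith
    _ ≤ rearr f u := hge

lemma DD_le_aa (hf : Measurable f) {l : ℝ} (hl : 0 ≤ l) : DD f l ≤ aa f l := by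
  have h1 : DD f l ≤ 1 := by
    rw [← volume_Ioo01]
    exact measure_mono (Set.sep_subset _ _)
  have hne : DD f l ≠ ⊤ := (lt_of_le_of_lt h1 ENNReal.one_lt_top).ne
  have hsub : Set.Ioo 0 (DD f l).toReal ⊆
      {u ∈ Set.Ioo (0:ℝ) 1 | ENNReal.ofReal l < rearr f u} := by
    intro u hu
    have htle : (DD f l).toReal ≤ 1 := by
      have := ENNReal.toReal_mono ENNReal.one_ne_top h1
      simpa using this
    have hu1 : u < 1 := lt_of_lt_of_le hu.2 htle
    refine ⟨⟨hu.1, hu1⟩, rearr_gt_of_lt_DD hf hl hu.1 ?_⟩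
    rw [ENNReal.ofReal_lt_iff_lt_toReal hu.1.le hne]
    exact hu.2
  calc DD f l = volume (Set.Ioo 0 (DD f l).toReal) := by
        rw [Real.volume_Ioo, sub_zero, ENNReal.ofReal_toReal hne]
    _ ≤ aa f l := measure_mono hsub

lemma bb_ne_top (I : ℝ → ℝ) (f : ℝ → ℝ≥0∞) (l : ℝ) : bb I f l ≠ ⊤ := by
  rw [bb]
  split
  · exact ENNReal.ofReal_ne_top
  · exact ENNReal.one_ne_top

lemma bb_antitone (hqc : Quasiconcave I) : Antitone (bb I f) := by
  intro x y hxy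
  have ha : aa f y ≤ aa f x := aa_antitone f hxy
  have hnex : aa f x ≠ ⊤ := aa_ne_top f x
  have hney : aa f y ≠ ⊤ := aa_ne_top f y
  unfold bb
  by_cases hx1 : aa f x < 1
  · have hy1 : aa f y < 1 := lt_of_le_of_lt ha hx1
    rw [if_pos hx1, if_pos hy1]
    rcases eq_or_ne (aa f y) 0 with h0 | h0
    · rw [h0]
      simp
    · have hcy : 0 < (aa f y).toReal := ENNReal.toReal_pos h0 hney
      have hcyx : (aa f y).toReal ≤ (aa f x).toReal := ENNReal.toReal_mono hnex ha
      have hcx1 : (aa f x).toReal < 1 := by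
        have := (ENNReal.toReal_lt_toReal hnex ENNReal.one_ne_top).2 hx1
        simpa using this
      have hymem : (aa f y).toReal ∈ Set.Ioo (0:ℝ) 1 := ⟨hcy, lt_of_le_of_lt hcyx hcx1⟩
      have hxmem : (aa f x).toReal ∈ Set.Ioo (0:ℝ) 1 := ⟨lt_of_lt_of_le hcy hcyx, hcx1⟩
      rw [Ibar_eq I hymem, Ibar_eq I hxmem]
      exact ENNReal.ofReal_le_ofReal (ratio_mono hqc hymem hxmem hcyx)
  · rw [if_neg hx1]
    by_cases hy1 : aa f y < 1
    · rw [if_pos hy1]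
      rcases eq_or_ne (aa f y) 0 with h0 | h0
      · rw [h0]; simp
      · have hcy : 0 < (aa f y).toReal := ENNReal.toReal_pos h0 hney
        have hcy1 : (aa f y).toReal < 1 := by
          have := (ENNReal.toReal_lt_toReal hney ENNReal.one_ne_top).2 hy1
          simpa using this
        have hymem : (aa f y).toReal ∈ Set.Ioo (0:ℝ) 1 := ⟨hcy, hcy1⟩
        rw [Ibar_eq I hymem]
        rw [← ENNReal.ofReal_one]
        exact ENNReal.ofReal_le_ofReal (ratio_le_one hqc hymem)
    · rw [if_neg hy1]

/-! ### The key pointwise estimate -/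

lemma key_pointwise (hqc : Quasiconcave I) (hf : Measurable f) {t s l : ℝ}
    (ht : t ∈ Set.Ioo (0:ℝ) 1) (hs : s ∈ Set.Ico t 1) (hl : 0 ≤ l)
    (hlt : ENNReal.ofReal l < rearr f s) :
    ENNReal.ofReal t < aa f l ∧ ENNReal.ofReal (s / I s) ≤ bb I f l := by
  have hs0 : 0 < s := lt_of_lt_of_le ht.1 hs.1
  have hsmem : s ∈ Set.Ioo (0:ℝ) 1 := ⟨hs0, hs.2⟩
  have h2 : ENNReal.ofReal s < aa f l := lt_of_lt_of_le (lt_DD hlt) (DD_le_aa hf hl)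
  have hane : aa f l ≠ ⊤ := aa_ne_top f l
  constructor
  · exact lt_of_le_of_lt (ENNReal.ofReal_le_ofReal hs.1) h2
  · by_cases hcase : aa f l < 1
    · rw [bb, if_pos hcase]
      have hsc : s < (aa f l).toReal := (ENNReal.ofReal_lt_iff_lt_toReal hs0.le hane).1 h2
      have hc1 : (aa f l).toReal < 1 := by
        have := (ENNReal.toReal_lt_toReal hane ENNReal.one_ne_top).2 hcase
        simpa using this
      have hcmem : (aa f l).toReal ∈ Set.Ioo (0:ℝ) 1 := ⟨lt_trans hs0 hsc, hc1⟩
      rw [Ibar_eq I hcmem]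
      exact ENNReal.ofReal_le_ofReal (ratio_mono hqc hsmem hcmem hsc.le)
    · rw [bb, if_neg hcase]
      rw [← ENNReal.ofReal_one]
      exact ENNReal.ofReal_le_ofReal (ratio_le_one hqc hsmem)

/-! ### Measurability of regions below antitone functions -/

lemma region_measurable {g : ℝ → ℝ≥0∞} (hg : Antitone g) :
    MeasurableSet {p : ℝ × ℝ | ENNReal.ofReal p.1 < g p.2} := by
  have hset : ∀ q : ℝ, MeasurableSet {x : ℝ | ENNReal.ofReal q < g x} := by
    intro q
    have h : Set.OrdConnected {x : ℝ | ENNReal.ofReal q < g x} :=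
      ⟨fun x hx y hy z hz => lt_of_lt_of_le hy (hg hz.2)⟩
    exact h.measurableSet
  have heq : {p : ℝ × ℝ | ENNReal.ofReal p.1 < g p.2}
      = ⋃ q : ℚ, Set.Iio (q : ℝ) ×ˢ {x : ℝ | ENNReal.ofReal (q:ℝ) < g x} := by
    ext ⟨t, x⟩
    simp only [Set.mem_setOf_eq, Set.mem_iUnion, Set.mem_prod, Set.mem_Iio]
    constructor
    · intro h
      rcases eq_or_ne (g x) ⊤ with htop | hne
      · obtain ⟨q, hq⟩ := exists_rat_gt t
        exact ⟨q, hq, by rw [htop]; exact ENNReal.ofReal_lt_top⟩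
      · have ht' : t < (g x).toReal := by
          rcases le_or_gt 0 t with h0 | h0
          · exact (ENNReal.ofReal_lt_iff_lt_toReal h0 hne).1 h
          · exact lt_of_lt_of_le h0 ENNReal.toReal_nonneg
        obtain ⟨q, hq1, hq2⟩ := exists_rat_btwn ht'
        refine ⟨q, hq1, ?_⟩
        rcases le_or_gt 0 (q:ℝ) with h0 | h0
        · exact (ENNReal.ofReal_lt_iff_lt_toReal h0 hne).2 hq2
        · rw [ENNReal.ofReal_of_nonpos h0.le]
          exact lt_of_le_of_lt (zero_le) h
    · rintro ⟨q, hq1, hq2⟩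
      exact lt_of_le_of_lt (ENNReal.ofReal_le_ofReal hq1.le) hq2
  rw [heq]
  exact MeasurableSet.iUnion fun q => measurableSet_Iio.prod (hset _)

lemma lower_measurable (x : ℝ≥0∞) : MeasurableSet {l : ℝ | ENNReal.ofReal l < x} := by
  have h : Set.OrdConnected {l : ℝ | ENNReal.ofReal l < x} :=
    ⟨fun a ha b hb z hz => lt_of_le_of_lt (ENNReal.ofReal_le_ofReal hz.2) hb⟩
  exact h.measurableSet

lemma rearr_section_measurable (f : ℝ → ℝ≥0∞) (l : ℝ) :
    MeasurableSet {u : ℝ | ENNReal.ofReal l < rearr f u} := by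
  have h : Set.OrdConnected {u : ℝ | ENNReal.ofReal l < rearr f u} :=
    ⟨fun a ha b hb z hz => lt_of_lt_of_le hb (rearr_antitone f hz.2)⟩
  exact h.measurableSet

/-! ### The integral `∫₀¹ I(s)/s ds ≤ C'` -/

lemma J_le (hqc : Quasiconcave I) {C' : ℝ} (hC' : 0 < C')
    (hstar : ∀ t ∈ Set.Ioo (0:ℝ) 1,
      ∫⁻ s in Set.Ioo (0:ℝ) t, ENNReal.ofReal (I s / s) ≤ ENNReal.ofReal (C' * I t)) :
    ∫⁻ s in Set.Ioo (0:ℝ) 1, ENNReal.ofReal (I s / s) ≤ ENNReal.ofReal C' := by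
  set ν := volume.withDensity (fun s : ℝ => ENNReal.ofReal (Ibar I s / s)) with hν
  have hiff : ∀ c : ℝ, c ≤ 1 →
      ∫⁻ s in Set.Ioo (0:ℝ) c, ENNReal.ofReal (I s / s) = ν (Set.Ioo 0 c) := by
    intro c hcle
    rw [hν, withDensity_apply _ measurableSet_Ioo]
    refine (setLIntegral_congr_fun measurableSet_Ioo (fun s hsm => ?_))
    rw [Ibar_eq I ⟨hsm.1, lt_of_lt_of_le hsm.2 hcle⟩]
  set u : ℕ → ℝ := fun n => 1 - 1 / (n + 1) with hu
  have humem : ∀ n : ℕ, u n < 1 := by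
    intro n
    have : (0:ℝ) < 1/((n:ℝ)+1) := by positivity
    simp only [hu]
    linarith
  have humono : Monotone (fun n : ℕ => Set.Ioo (0:ℝ) (u n)) := by
    intro m n hmn
    apply Set.Ioo_subset_Ioo_right
    have h1 : (1:ℝ)/((n:ℝ)+1) ≤ 1/((m:ℝ)+1) := by
      apply one_div_le_one_div_of_le (by positivity)
      have : (m:ℝ) ≤ n := Nat.cast_le.2 hmn
      linarith
    simp only [hu]
    linarith
  have hUnion : ⋃ n, Set.Ioo (0:ℝ) (u n) = Set.Ioo 0 1 := by
    ext x
    simp only [Set.mem_iUnion, Set.mem_Ioo]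
    constructor
    · rintro ⟨n, h1, h2⟩; exact ⟨h1, lt_trans h2 (humem n)⟩
    · rintro ⟨h1, h2⟩
      obtain ⟨n, hn⟩ := exists_nat_one_div_lt (show (0:ℝ) < 1 - x by linarith)
      refine ⟨n, h1, ?_⟩
      simp only [hu]
      linarith
  have hsup : ν (Set.Ioo (0:ℝ) 1) = ⨆ n, ν (Set.Ioo (0:ℝ) (u n)) := by
    rw [← hUnion]
    exact humono.measure_iUnion
  rw [hiff 1 le_rfl, hsup]
  refine iSup_le fun n => ?_
  rcases le_or_gt (u n) 0 with h0 | h0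
  · have hemp : Set.Ioo (0:ℝ) (u n) = ∅ := Set.Ioo_eq_empty (by linarith)
    rw [hemp, measure_empty]
    exact zero_le
  · rw [← hiff (u n) (humem n).le]
    calc ∫⁻ s in Set.Ioo (0:ℝ) (u n), ENNReal.ofReal (I s / s)
        ≤ ENNReal.ofReal (C' * I (u n)) := hstar (u n) ⟨h0, humem n⟩
      _ ≤ ENNReal.ofReal C' := by
          apply ENNReal.ofReal_le_ofReal
          have hI := mem_I hqc ⟨h0, humem n⟩
          nlinarith [hI.2]

/-! ### Layer cake for `aa` -/

lemma layer_cake_aa (f : ℝ → ℝ≥0∞) :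
    ∫⁻ l in Set.Ioi (0:ℝ), aa f l = ∫⁻ u in Set.Ioo (0:ℝ) 1, rearr f u := by
  set T : Set (ℝ × ℝ) := {p : ℝ × ℝ | ENNReal.ofReal p.1 < rearr f p.2} with hT
  have hTmeas : MeasurableSet T := region_measurable (rearr_antitone f)
  have h1 : ∀ l : ℝ, aa f l
      = ∫⁻ u in Set.Ioo (0:ℝ) 1, T.indicator 1 (l, u) := by
    intro l
    have heq : ∀ u : ℝ, (T.indicator 1 (l, u) : ℝ≥0∞)
        = {u : ℝ | ENNReal.ofReal l < rearr f u}.indicator 1 u := by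
      intro u
      by_cases hm : ENNReal.ofReal l < rearr f u
      · rw [Set.indicator_of_mem (show u ∈ {u : ℝ | ENNReal.ofReal l < rearr f u} from hm),
          Set.indicator_of_mem (show ((l,u) : ℝ × ℝ) ∈ T from hm)]
        rfl
      · rw [Set.indicator_of_notMem (show u ∉ {u : ℝ | ENNReal.ofReal l < rearr f u} from hm),
          Set.indicator_of_notMem (show ((l,u) : ℝ × ℝ) ∉ T from hm)]
    rw [lintegral_congr heq, lintegral_indicator_one (rearr_section_measurable f l),
      Measure.restrict_apply (rearr_section_measurable f l)]
    rw [aa]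
    congr 1
    ext u
    simp only [Set.mem_inter_iff, Set.mem_setOf_eq]
    tauto
  have h2 : ∀ u : ℝ, (∫⁻ l in Set.Ioi (0:ℝ), T.indicator 1 (l, u)) = rearr f u := by
    intro u
    have heq : ∀ l : ℝ, (T.indicator 1 (l, u) : ℝ≥0∞)
        = {l : ℝ | ENNReal.ofReal l < rearr f u}.indicator 1 l := by
      intro l
      by_cases hm : ENNReal.ofReal l < rearr f u
      · rw [Set.indicator_of_mem (show l ∈ {l : ℝ | ENNReal.ofReal l < rearr f u} from hm),
          Set.indicator_of_mem (show ((l,u) : ℝ × ℝ) ∈ T from hm)]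
        rfl
      · rw [Set.indicator_of_notMem (show l ∉ {l : ℝ | ENNReal.ofReal l < rearr f u} from hm),
          Set.indicator_of_notMem (show ((l,u) : ℝ × ℝ) ∉ T from hm)]
    rw [lintegral_congr heq, lintegral_indicator_one (lower_measurable _),
      Measure.restrict_apply (lower_measurable _)]
    exact meas_layer' _
  calc ∫⁻ l in Set.Ioi (0:ℝ), aa f l
      = ∫⁻ l in Set.Ioi (0:ℝ), ∫⁻ u in Set.Ioo (0:ℝ) 1, T.indicator 1 (l, u) :=
        lintegral_congr h1
    _ = ∫⁻ u in Set.Ioo (0:ℝ) 1, ∫⁻ l in Set.Ioi (0:ℝ), T.indicator 1 (l, u) := by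
        apply lintegral_lintegral_swap
        exact (measurable_one.indicator hTmeas).aemeasurable
    _ = ∫⁻ u in Set.Ioo (0:ℝ) 1, rearr f u := lintegral_congr h2

/-! ### Backward direction: condition (★) implies boundedness of `T_I` on `L¹` -/

lemma backward (hqc : Quasiconcave I) (h : StarCond I) :
    ∃ C : ℝ, 0 < C ∧ ∀ f : ℝ → ℝ≥0∞, Measurable f →
      ∫⁻ t in Set.Ioo (0:ℝ) 1, TI I f t ≤
        ENNReal.ofReal C * ∫⁻ t in Set.Ioo (0:ℝ) 1, rearr f t := by
  obtain ⟨C', hC'pos, hstar⟩ := h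
  refine ⟨C', hC'pos, fun f hf => ?_⟩
  set F : ℝ → ℝ≥0∞ := fun s => ENNReal.ofReal (Ibar I s / s) with hF
  set S : Set (ℝ × ℝ) := {p : ℝ × ℝ | ENNReal.ofReal p.1 < aa f p.2} with hSdef
  have hSmeas : MeasurableSet S := region_measurable (aa_antitone f)
  -- Step 1: pointwise bound for TI
  have step1 : ∀ t ∈ Set.Ioo (0:ℝ) 1, TI I f t
      ≤ ∫⁻ l in Set.Ioi (0:ℝ), F t * (bb I f l * S.indicator 1 (t, l)) := by
    intro t ht
    have hFt : F t = ENNReal.ofReal (I t / t) := by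
      simp only [hF]
      rw [Ibar_eq I ht]
    have hsup : (⨆ s ∈ Set.Ico t 1, ENNReal.ofReal (s / I s) * rearr f s)
        ≤ ∫⁻ l in Set.Ioi (0:ℝ), bb I f l * S.indicator 1 (t, l) := by
      refine iSup₂_le fun s hs => ?_
      have heq1 : ENNReal.ofReal (s / I s) * rearr f s
          = ∫⁻ l in Set.Ioi (0:ℝ), ENNReal.ofReal (s / I s) *
              ({l : ℝ | ENNReal.ofReal l < rearr f s}.indicator 1 l) := by
        rw [lintegral_const_mul' _ _ ENNReal.ofReal_ne_top,
          lintegral_indicator_one (lower_measurable _),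
          Measure.restrict_apply (lower_measurable _), meas_layer' (rearr f s)]
      rw [heq1]
      refine lintegral_mono_ae (((ae_restrict_iff' measurableSet_Ioi).2
        (ae_of_all _ fun l hl => ?_)))
      by_cases hmem : ENNReal.ofReal l < rearr f s
      · have hkey := key_pointwise hqc hf ht hs (le_of_lt hl) hmem
        rw [Set.indicator_of_mem (show l ∈ {l : ℝ | ENNReal.ofReal l < rearr f s} from hmem),
          Set.indicator_of_mem (show ((t, l) : ℝ × ℝ) ∈ S from hkey.1)]
        simp only [Pi.one_apply, mul_one]
        exact hkey.2
      · rw [Set.indicator_of_notMem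
            (show l ∉ {l : ℝ | ENNReal.ofReal l < rearr f s} from hmem), mul_zero]
        exact zero_le
    calc TI I f t = F t * ⨆ s ∈ Set.Ico t 1, ENNReal.ofReal (s / I s) * rearr f s := by
          rw [TI, hFt]
      _ ≤ F t * ∫⁻ l in Set.Ioi (0:ℝ), bb I f l * S.indicator 1 (t, l) :=
          mul_le_mul_right hsup _
      _ = ∫⁻ l in Set.Ioi (0:ℝ), F t * (bb I f l * S.indicator 1 (t, l)) := by
          rw [lintegral_const_mul' _ _ (show F t ≠ ⊤ by rw [hF]; exact ENNReal.ofReal_ne_top)]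
  -- Step 2: integrate the pointwise bound
  have step2 : ∫⁻ t in Set.Ioo (0:ℝ) 1, TI I f t
      ≤ ∫⁻ t in Set.Ioo (0:ℝ) 1, ∫⁻ l in Set.Ioi (0:ℝ),
          F t * (bb I f l * S.indicator 1 (t, l)) :=
    lintegral_mono_ae ((ae_restrict_iff' measurableSet_Ioo).2 (ae_of_all _ step1))
  -- Step 3: Tonelli
  have hψ : Measurable (Function.uncurry fun t l : ℝ => F t * (bb I f l * S.indicator 1 (t, l))) := by
    apply Measurable.mul
    · exact ((((Ibar_mono hqc).measurable).div measurable_id).ennreal_ofReal).comp measurable_fst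
    · exact (((bb_antitone hqc (f := f)).measurable).comp measurable_snd).mul
        (measurable_one.indicator hSmeas)
  have hswap : (∫⁻ t in Set.Ioo (0:ℝ) 1, ∫⁻ l in Set.Ioi (0:ℝ),
        F t * (bb I f l * S.indicator 1 (t, l)))
      = ∫⁻ l in Set.Ioi (0:ℝ), ∫⁻ t in Set.Ioo (0:ℝ) 1,
          F t * (bb I f l * S.indicator 1 (t, l)) :=
    lintegral_lintegral_swap hψ.aemeasurable
  -- Step 4: estimate the inner integral for each level l
  have step4 : ∀ l : ℝ, (∫⁻ t in Set.Ioo (0:ℝ) 1, F t * (bb I f l * S.indicator 1 (t, l)))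
      ≤ ENNReal.ofReal C' * aa f l := by
    intro l
    have hUconn : Set.OrdConnected {t : ℝ | ENNReal.ofReal t < aa f l} :=
      ⟨fun x hx y hy z hz => lt_of_le_of_lt (ENNReal.ofReal_le_ofReal hz.2) hy⟩
    have hU : MeasurableSet {t : ℝ | ENNReal.ofReal t < aa f l} := hUconn.measurableSet
    have hane : aa f l ≠ ⊤ := aa_ne_top f l
    have heq : ∀ t : ℝ, F t * (bb I f l * S.indicator 1 (t, l))
        = bb I f l * ({t : ℝ | ENNReal.ofReal t < aa f l}.indicator F t) := by
      intro t
      by_cases hmem : ENNReal.ofReal t < aa f l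
      · rw [Set.indicator_of_mem (show t ∈ {t : ℝ | ENNReal.ofReal t < aa f l} from hmem),
          Set.indicator_of_mem (show ((t, l) : ℝ × ℝ) ∈ S from hmem)]
        simp only [Pi.one_apply, mul_one]
        ring
      · rw [Set.indicator_of_notMem
            (show t ∉ {t : ℝ | ENNReal.ofReal t < aa f l} from hmem),
          Set.indicator_of_notMem (show ((t, l) : ℝ × ℝ) ∉ S from hmem)]
        simp
    rw [lintegral_congr heq, lintegral_const_mul' _ _ (bb_ne_top I f l),
      lintegral_indicator hU, Measure.restrict_restrict hU]
    have hcle1 : (aa f l).toReal ≤ 1 := by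
      have := ENNReal.toReal_mono ENNReal.one_ne_top (aa_le_one f l)
      simpa using this
    have hseteq : {t : ℝ | ENNReal.ofReal t < aa f l} ∩ Set.Ioo 0 1
        = Set.Ioo 0 (aa f l).toReal := by
      ext t
      simp only [Set.mem_inter_iff, Set.mem_setOf_eq, Set.mem_Ioo]
      constructor
      · rintro ⟨h1, h2, h3⟩
        exact ⟨h2, (ENNReal.ofReal_lt_iff_lt_toReal h2.le hane).1 h1⟩
      · rintro ⟨h1, h2⟩
        exact ⟨(ENNReal.ofReal_lt_iff_lt_toReal h1.le hane).2 h2, h1, lt_of_lt_of_le h2 hcle1⟩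
    rw [hseteq]
    rcases eq_or_ne (aa f l) 0 with h0 | h0
    · have hc0 : (aa f l).toReal = 0 := by rw [h0]; simp
      rw [hc0, Set.Ioo_self, Measure.restrict_empty, lintegral_zero_measure, mul_zero]
      exact zero_le
    · have hcpos : 0 < (aa f l).toReal := ENNReal.toReal_pos h0 hane
      have hFeq : ∫⁻ t in Set.Ioo (0:ℝ) (aa f l).toReal, F t
          = ∫⁻ t in Set.Ioo (0:ℝ) (aa f l).toReal, ENNReal.ofReal (I t / t) := by
        refine setLIntegral_congr_fun measurableSet_Ioo (fun t htm => ?_)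
        simp only [hF]
        rw [Ibar_eq I ⟨htm.1, lt_of_lt_of_le htm.2 hcle1⟩]
      rw [hFeq]
      rcases lt_or_ge (aa f l) 1 with h1 | h1
      · have hc1 : (aa f l).toReal < 1 := by
          have := (ENNReal.toReal_lt_toReal hane ENNReal.one_ne_top).2 h1
          simpa using this
        have hcmem : (aa f l).toReal ∈ Set.Ioo (0:ℝ) 1 := ⟨hcpos, hc1⟩
        have hbbl : bb I f l = ENNReal.ofReal ((aa f l).toReal / I (aa f l).toReal) := by
          rw [bb, if_pos h1, Ibar_eq I hcmem]
        rw [hbbl]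
        have hIc := mem_I hqc hcmem
        calc ENNReal.ofReal ((aa f l).toReal / I (aa f l).toReal)
              * ∫⁻ t in Set.Ioo (0:ℝ) (aa f l).toReal, ENNReal.ofReal (I t / t)
            ≤ ENNReal.ofReal ((aa f l).toReal / I (aa f l).toReal)
              * ENNReal.ofReal (C' * I (aa f l).toReal) :=
              mul_le_mul_right (hstar _ hcmem) _
          _ = ENNReal.ofReal (((aa f l).toReal / I (aa f l).toReal)
              * (C' * I (aa f l).toReal)) :=
              (ENNReal.ofReal_mul (div_nonneg hcpos.le hIc.1.le)).symm
          _ = ENNReal.ofReal (C' * (aa f l).toReal) := by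
              congr 1
              field_simp [hIc.1.ne']
          _ = ENNReal.ofReal C' * ENNReal.ofReal (aa f l).toReal :=
              ENNReal.ofReal_mul hC'pos.le
          _ = ENNReal.ofReal C' * aa f l := by rw [ENNReal.ofReal_toReal hane]
      · have h1' : aa f l = 1 := le_antisymm (aa_le_one f l) h1
        have hc1 : (aa f l).toReal = 1 := by rw [h1']; simp
        have hbbl : bb I f l = 1 := by rw [bb, if_neg (not_lt.2 h1)]
        rw [hbbl, one_mul, hc1, h1', mul_one]
        exact J_le hqc hC'pos hstar
  -- Assemble
  calc ∫⁻ t in Set.Ioo (0:ℝ) 1, TI I f t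
      ≤ ∫⁻ l in Set.Ioi (0:ℝ), ∫⁻ t in Set.Ioo (0:ℝ) 1,
          F t * (bb I f l * S.indicator 1 (t, l)) := by rw [← hswap]; exact step2
    _ ≤ ∫⁻ l in Set.Ioi (0:ℝ), ENNReal.ofReal C' * aa f l :=
        lintegral_mono fun l => step4 l
    _ = ENNReal.ofReal C' * ∫⁻ l in Set.Ioi (0:ℝ), aa f l :=
        lintegral_const_mul' _ _ ENNReal.ofReal_ne_top
    _ = ENNReal.ofReal C' * ∫⁻ t in Set.Ioo (0:ℝ) 1, rearr f t := by
        rw [layer_cake_aa f]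

/-! ### Forward direction: boundedness implies condition (★) -/

lemma rearr_indicator {a : ℝ} (ha : a ∈ Set.Ioo (0:ℝ) 1) :
    rearr ((Set.Ioo (0:ℝ) a).indicator fun _ => (1:ℝ≥0∞))
      = (Set.Iio a).indicator fun _ => (1:ℝ≥0∞) := by
  set f : ℝ → ℝ≥0∞ := (Set.Ioo (0:ℝ) a).indicator fun _ => (1:ℝ≥0∞) with hfdef
  have hset : ∀ l : ℝ≥0∞, {x ∈ Set.Ioo (0:ℝ) 1 | l < f x}
      = if l < 1 then Set.Ioo 0 a else ∅ := by
    intro l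
    by_cases hl : l < 1
    · rw [if_pos hl]
      ext x
      simp only [Set.mem_setOf_eq, Set.mem_Ioo]
      constructor
      · rintro ⟨hx1, hx2⟩
        by_contra hxa
        have hfx : f x = 0 := by
          rw [hfdef]
          exact Set.indicator_of_notMem (by simpa [Set.mem_Ioo] using hxa) _
        rw [hfx] at hx2
        exact absurd hx2 (by simp)
      · intro hx
        refine ⟨⟨hx.1, lt_trans hx.2 ha.2⟩, ?_⟩
        have hfx : f x = 1 := by
          rw [hfdef]
          exact Set.indicator_of_mem (by simpa [Set.mem_Ioo] using hx) _
        rw [hfx]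
        exact hl
    · rw [if_neg hl]
      push_neg at hl
      ext x
      simp only [Set.mem_setOf_eq, Set.mem_empty_iff_false, iff_false, not_and]
      intro _
      have hfx : f x ≤ 1 := by
        rw [hfdef]
        by_cases hm : x ∈ Set.Ioo (0:ℝ) a
        · rw [Set.indicator_of_mem hm]
        · rw [Set.indicator_of_notMem hm]; exact zero_le
      exact not_lt.2 (hfx.trans hl)
  funext s
  by_cases hsa : s < a
  · have hseteq : {l : ℝ≥0∞ | volume {x ∈ Set.Ioo (0:ℝ) 1 | l < f x} ≤ ENNReal.ofReal s}
        = Set.Ici 1 := by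
      ext l
      simp only [Set.mem_setOf_eq, Set.mem_Ici]
      constructor
      · intro hle
        by_contra hl1
        push_neg at hl1
        rw [hset l, if_pos hl1, Real.volume_Ioo, sub_zero] at hle
        have : ENNReal.ofReal s < ENNReal.ofReal a :=
          (ENNReal.ofReal_lt_ofReal_iff ha.1).2 hsa
        exact absurd hle (not_le.2 this)
      · intro hl1
        rw [hset l, if_neg (not_lt.2 hl1)]
        simp
    rw [rearr, hseteq, csInf_Ici, Set.indicator_of_mem (show s ∈ Set.Iio a from hsa)]
  · push_neg at hsa
    rw [Set.indicator_of_notMem (show s ∉ Set.Iio a by simpa using hsa)]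
    apply le_antisymm _ (zero_le)
    apply sInf_le
    show volume {x ∈ Set.Ioo (0:ℝ) 1 | (0:ℝ≥0∞) < f x} ≤ ENNReal.ofReal s
    rw [hset 0, if_pos (by norm_num : (0:ℝ≥0∞) < 1), Real.volume_Ioo, sub_zero]
    exact ENNReal.ofReal_le_ofReal hsa

lemma forward (hqc : Quasiconcave I)
    (h : ∃ C : ℝ, 0 < C ∧ ∀ f : ℝ → ℝ≥0∞, Measurable f →
      ∫⁻ t in Set.Ioo (0:ℝ) 1, TI I f t ≤
        ENNReal.ofReal C * ∫⁻ t in Set.Ioo (0:ℝ) 1, rearr f t) :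
    StarCond I := by
  obtain ⟨C, hC, hbdd⟩ := h
  refine ⟨C, hC, fun a ha => ?_⟩
  have hIa := mem_I hqc ha
  set f : ℝ → ℝ≥0∞ := (Set.Ioo (0:ℝ) a).indicator (fun _ => (1:ℝ≥0∞)) with hfdef
  have hfm : Measurable f := measurable_const.indicator measurableSet_Ioo
  have hre : rearr f = (Set.Iio a).indicator (fun _ => (1:ℝ≥0∞)) := rearr_indicator ha
  have hnorm : ∫⁻ t in Set.Ioo (0:ℝ) 1, rearr f t = ENNReal.ofReal a := by
    rw [lintegral_congr (fun t => by rw [hre] :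
        ∀ t : ℝ, rearr f t = (Set.Iio a).indicator (fun _ => (1:ℝ≥0∞)) t),
      lintegral_indicator measurableSet_Iio, Measure.restrict_restrict measurableSet_Iio,
      setLIntegral_one]
    have hseteq : Set.Iio a ∩ Set.Ioo 0 1 = Set.Ioo 0 a := by
      ext t
      simp only [Set.mem_inter_iff, Set.mem_Iio, Set.mem_Ioo]
      constructor
      · rintro ⟨h1, h2, h3⟩; exact ⟨h2, h1⟩
      · rintro ⟨h1, h2⟩; exact ⟨h2, h1, lt_trans h2 ha.2⟩
    rw [hseteq, Real.volume_Ioo, sub_zero]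
  have hlow : ∀ t ∈ Set.Ioo (0:ℝ) a,
      ENNReal.ofReal (I t / t) * ENNReal.ofReal (a / I a) ≤ TI I f t := by
    intro t ht
    have htm : t ∈ Set.Ioo (0:ℝ) 1 := ⟨ht.1, lt_trans ht.2 ha.2⟩
    simp only [TI]
    apply mul_le_mul_right
    have htend : Tendsto (fun s : ℝ => ENNReal.ofReal (s / I a)) (nhdsWithin a (Set.Iio a))
        (nhds (ENNReal.ofReal (a / I a))) := by
      apply (ENNReal.continuous_ofReal.tendsto _).comp
      exact ((continuous_id.div_const (I a)).tendsto a).mono_left nhdsWithin_le_nhds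
    apply le_of_tendsto htend
    have hev1 : ∀ᶠ s in nhdsWithin a (Set.Iio a), t < s :=
      eventually_nhdsWithin_of_eventually_nhds (eventually_gt_nhds ht.2)
    filter_upwards [hev1, self_mem_nhdsWithin] with s hts hsa
    have hsmem : s ∈ Set.Ioo (0:ℝ) 1 := ⟨lt_trans ht.1 hts, lt_trans hsa ha.2⟩
    have hfs : rearr f s = 1 := by
      rw [hre]
      exact Set.indicator_of_mem hsa _
    calc ENNReal.ofReal (s / I a) ≤ ENNReal.ofReal (s / I s) := by
          apply ENNReal.ofReal_le_ofReal
          exact div_le_div_of_nonneg_left hsmem.1.le (mem_I hqc hsmem).1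
            (hqc.2.1 hsmem ha (le_of_lt hsa))
      _ = ENNReal.ofReal (s / I s) * rearr f s := by rw [hfs, mul_one]
      _ ≤ ⨆ s' ∈ Set.Ico t 1, ENNReal.ofReal (s' / I s') * rearr f s' :=
          le_iSup₂_of_le s ⟨hts.le, hsmem.2⟩ le_rfl
  have hmain := hbdd f hfm
  rw [hnorm] at hmain
  have hJa : ENNReal.ofReal (a / I a) * ∫⁻ s in Set.Ioo (0:ℝ) a, ENNReal.ofReal (I s / s)
      ≤ ENNReal.ofReal C * ENNReal.ofReal a := by
    calc ENNReal.ofReal (a / I a) * ∫⁻ s in Set.Ioo (0:ℝ) a, ENNReal.ofReal (I s / s)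
        = ∫⁻ t in Set.Ioo (0:ℝ) a, ENNReal.ofReal (I t / t) * ENNReal.ofReal (a / I a) := by
          rw [← lintegral_const_mul' _ _ ENNReal.ofReal_ne_top]
          exact lintegral_congr fun t => mul_comm _ _
      _ ≤ ∫⁻ t in Set.Ioo (0:ℝ) a, TI I f t :=
          lintegral_mono_ae ((ae_restrict_iff' measurableSet_Ioo).2 (ae_of_all _ hlow))
      _ ≤ ∫⁻ t in Set.Ioo (0:ℝ) 1, TI I f t :=
          lintegral_mono_set (Set.Ioo_subset_Ioo_right ha.2.le)
      _ ≤ ENNReal.ofReal C * ENNReal.ofReal a := hmain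
  have hX0 : ENNReal.ofReal (a / I a) ≠ 0 := by
    rw [Ne, ENNReal.ofReal_eq_zero, not_le]
    exact div_pos ha.1 hIa.1
  have hrw : ENNReal.ofReal C * ENNReal.ofReal a
      = ENNReal.ofReal (a / I a) * ENNReal.ofReal (C * I a) := by
    rw [← ENNReal.ofReal_mul (div_nonneg ha.1.le hIa.1.le), ← ENNReal.ofReal_mul hC.le]
    congr 1
    field_simp [hIa.1.ne']
  rw [hrw] at hJa
  exact (ENNReal.mul_le_mul_iff_right hX0 ENNReal.ofReal_ne_top).1 hJa

end Stmt5aux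


/-- Theorem 3.4 (ii) / `thm:BoundednessOfTIm`.  For quasiconcave `I`,
`T_I : L¹ → L¹` is bounded iff `I` satisfies condition (★). -/
theorem statement5 (I : ℝ → ℝ) (hqc : Quasiconcave I) :
    (∃ C : ℝ, 0 < C ∧ ∀ f : ℝ → ℝ≥0∞, Measurable f →
        ∫⁻ t in Set.Ioo (0:ℝ) 1, TI I f t ≤
          ENNReal.ofReal C * ∫⁻ t in Set.Ioo (0:ℝ) 1, rearr f t)
    ↔ StarCond I :=
  ⟨fun h => Stmt5aux.forward hqc h, fun h => Stmt5aux.backward hqc h⟩
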